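/- Let (S, ⋆) be a finite fusion rule, λ : S → F a map, and n a positive integer. Then there exists a commutative nonassociative F-algebra U equipped with n (S,⋆)-decompositions (U_s^i)_{s∈S} (i = 1,…,n) and elements u₁,…,u_n such that (u_i, (U_s^i)_{s∈S}) is an (F,λ)-axis for each i, U is the smallest subalgebra of U containing u₁,…,u_n and invariant under every projection pr_s^i, and with the following universal property: for every commutative nonassociative F-algebra N equipped with n (S,⋆)-decompositions (N_s^i)_{s∈S} and elements b₁,…,b_n such that each (b_i, (N_s^i)_{s∈S}) is an (F,λ)-axis and N is the smallest subalgebra of N containing b₁,…,b_n and invariant under all its projections, there exists a unique F-algebra homomorphism φ : U → N with φ(u_i) = b_i and φ(U_s^i) ⊆ N_s^i for all i = 1,…,n and s ∈ S; moreover this φ is surjective. -/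

import Mathlib

/-- A commutative nonassociative algebra over the field `F`, bundled with its structure. -/
structure CommNAAlg (F : Type) [Field F] where
  carrier : Type
  [ring : NonUnitalNonAssocCommRing carrier]
  [mod : Module F carrier]
  [scc : SMulCommClass F carrier carrier]
  [ist : IsScalarTower F carrier carrier]

attribute [instance] CommNAAlg.ring CommNAAlg.mod CommNAAlg.scc CommNAAlg.ist

/-- An `(S,⋆)`-decomposition of `M`: a direct sum decomposition `M = ⊕_{s ∈ S} M_s`
(recorded together with its projections `pr_s`) satisfying the fusion rule `⋆`. -/
structure Decomposition (F : Type) [Field F] (M : Type) [NonUnitalNonAssocCommRing M]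
    [Module F M] (S : Type) [Fintype S] (star : S → S → Set S) where
  comp : S → Submodule F M
  proj : S → M →ₗ[F] M
  proj_mem : ∀ s x, proj s x ∈ comp s
  proj_eq_self : ∀ s, ∀ x ∈ comp s, proj s x = x
  proj_eq_zero : ∀ s t, s ≠ t → ∀ x ∈ comp t, proj s x = 0
  sum_proj : ∀ x, ∑ s, proj s x = x
  fusion : ∀ s t, ∀ x ∈ comp s, ∀ y ∈ comp t, x * y ∈ ⨆ u ∈ star s t, comp u

/-- `M` is generated by `X` as a decomposition algebra (w.r.t. the family of
decompositions `D`): the smallest subalgebra containing `X` and invariant under all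
the projections of all the decompositions is `M` itself. -/
def GensDecompAlg {F : Type} [Field F] {M : Type} [NonUnitalNonAssocCommRing M]
    [Module F M] {S : Type} [Fintype S] {star : S → S → Set S} {J : Type}
    (D : J → Decomposition F M S star) (X : Set M) : Prop :=
  ∀ A : NonUnitalSubalgebra F M, X ⊆ ↑A →
    (∀ j s, ∀ x ∈ A, (D j).proj s x ∈ A) → ∀ x : M, x ∈ A

/-- `(a, D)` is an `(F,λ)`-axis: `a` acts on the component `D_s` as the scalar `λ s`. -/
def IsLambdaAxis {F : Type} [Field F] {M : Type} [NonUnitalNonAssocCommRing M]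
    [Module F M] {S : Type} [Fintype S] {star : S → S → Set S}
    (lam : S → F) (a : M) (D : Decomposition F M S star) : Prop :=
  ∀ s, ∀ x ∈ D.comp s, a * x = lam s • x

namespace UA

noncomputable section

open Finsupp MonoidAlgebra

/-- Free terms: generators, products, and formal projections. -/
inductive T (S : Type) (n : ℕ) : Type
  | gen : Fin n → T S n
  | mul : T S n → T S n → T S n
  | prj : Fin n → S → T S n → T S n

instance {S n} : Mul (T S n) := ⟨T.mul⟩

variable (F : Type) [Field F] (S : Type) [Fintype S] (star : S → S → Set S)
  (lam : S → F) (n : ℕ)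

abbrev V := MonoidAlgebra F (T S n)

def P (j : Fin n) (s : S) : V F S n →ₗ[F] V F S n := MonoidAlgebra.mapDomainLinearMap F F (T.prj j s)

def genV (i : Fin n) : V F S n := MonoidAlgebra.single (T.gen i) 1

/-- The relations we impose, as a set closed under multiplication and projections. -/
inductive Rel : V F S n → Prop
  | comm (x y : V F S n) : Rel (x * y - y * x)
  | sum_proj (j : Fin n) (x : V F S n) : Rel ((∑ s, P F S n j s x) - x)
  | proj_proj (j : Fin n) (s : S) (x : V F S n) :
      Rel (P F S n j s (P F S n j s x) - P F S n j s x)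
  | proj_ne (j : Fin n) {s t : S} (h : s ≠ t) (x : V F S n) :
      Rel (P F S n j s (P F S n j t x))
  | fusion (j : Fin n) {s t u : S} (h : u ∉ star s t) (x y : V F S n) :
      Rel (P F S n j u (P F S n j s x * P F S n j t y))
  | axis (i : Fin n) (s : S) (x : V F S n) :
      Rel (genV F S n i * P F S n i s x - lam s • P F S n i s x)
  | mul_left (v : V F S n) {x : V F S n} : Rel x → Rel (v * x)
  | mul_right (v : V F S n) {x : V F S n} : Rel x → Rel (x * v)
  | proj_cl (j : Fin n) (s : S) {x : V F S n} : Rel x → Rel (P F S n j s x)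

def R : Submodule F (V F S n) := Submodule.span F {x | Rel F S star lam n x}

variable {F S star lam n}

lemma R_closed (L : V F S n →ₗ[F] V F S n)
    (hL : ∀ x, Rel F S star lam n x → Rel F S star lam n (L x))
    {x : V F S n} (hx : x ∈ R F S star lam n) : L x ∈ R F S star lam n := by
  have : Submodule.map L (R F S star lam n) ≤ R F S star lam n := by
    rw [R, Submodule.map_span, Submodule.span_le]
    rintro _ ⟨y, hy, rfl⟩
    exact Submodule.subset_span (hL y hy)
  exact this ⟨x, hx, rfl⟩

lemma R_mul_left (v : V F S n) {x : V F S n} (hx : x ∈ R F S star lam n) :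
    v * x ∈ R F S star lam n :=
  R_closed (LinearMap.mul F (V F S n) v) (fun _ h => Rel.mul_left v h) hx

lemma R_mul_right (v : V F S n) {x : V F S n} (hx : x ∈ R F S star lam n) :
    x * v ∈ R F S star lam n :=
  R_closed ((LinearMap.mul F (V F S n)).flip v) (fun _ h => Rel.mul_right v h) hx

lemma R_proj (j : Fin n) (s : S) {x : V F S n} (hx : x ∈ R F S star lam n) :
    P F S n j s x ∈ R F S star lam n :=
  R_closed (P F S n j s) (fun _ h => Rel.proj_cl j s h) hx

variable (F S star lam n)

abbrev U := V F S n ⧸ R F S star lam n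

def mk : V F S n →ₗ[F] U F S star lam n := (R F S star lam n).mkQ

variable {F S star lam n}

lemma mk_surjective : Function.Surjective (mk F S star lam n) :=
  (R F S star lam n).mkQ_surjective

lemma mk_eq_mk {x y : V F S n} (h : x - y ∈ R F S star lam n) :
    mk F S star lam n x = mk F S star lam n y := by
  simpa [mk, Submodule.Quotient.eq] using h

lemma mk_eq_zero {x : V F S n} (h : x ∈ R F S star lam n) :
    mk F S star lam n x = 0 := by
  simpa [mk, Submodule.Quotient.mk_eq_zero] using h

variable (F S star lam n)

def mulQ1 (x : V F S n) : U F S star lam n →ₗ[F] U F S star lam n :=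
  Submodule.liftQ _ ((R F S star lam n).mkQ ∘ₗ LinearMap.mul F (V F S n) x)
    (fun y hy => by
      simp only [LinearMap.mem_ker, LinearMap.comp_apply, LinearMap.mul_apply',
        Submodule.mkQ_apply, Submodule.Quotient.mk_eq_zero]
      exact R_mul_left x hy)

lemma mulQ1_mk (x y : V F S n) :
    mulQ1 F S star lam n x (mk F S star lam n y) = mk F S star lam n (x * y) := rfl

def mulQ2 : V F S n →ₗ[F] U F S star lam n →ₗ[F] U F S star lam n where
  toFun := mulQ1 F S star lam n
  map_add' x y := by
    refine LinearMap.ext fun z => ?_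
    obtain ⟨z, rfl⟩ := mk_surjective z
    simp only [mulQ1_mk, LinearMap.add_apply, add_mul, map_add]
  map_smul' c x := by
    refine LinearMap.ext fun z => ?_
    obtain ⟨z, rfl⟩ := mk_surjective z
    simp only [mulQ1_mk, LinearMap.smul_apply, smul_mul_assoc, map_smul, RingHom.id_apply]

def mulU : U F S star lam n →ₗ[F] U F S star lam n →ₗ[F] U F S star lam n :=
  Submodule.liftQ _ (mulQ2 F S star lam n)
    (fun x hx => by
      simp only [LinearMap.mem_ker]
      refine LinearMap.ext fun z => ?_
      obtain ⟨z, rfl⟩ := mk_surjective z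
      show mulQ1 F S star lam n x (mk F S star lam n z) = 0
      rw [mulQ1_mk]
      exact mk_eq_zero (R_mul_right z hx))

instance instRing : NonUnitalNonAssocCommRing (U F S star lam n) :=
  { (inferInstance : AddCommGroup (U F S star lam n)) with
    mul := fun x y => mulU F S star lam n x y
    left_distrib := fun a b c => map_add (mulU F S star lam n a) b c
    right_distrib := fun a b c => by
      show mulU F S star lam n (a + b) c = _
      rw [map_add]; rfl
    zero_mul := fun a => by
      show mulU F S star lam n 0 a = 0
      rw [map_zero]; rfl
    mul_zero := fun a => map_zero (mulU F S star lam n a)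
    mul_comm := fun a b => by
      obtain ⟨a, rfl⟩ := mk_surjective a
      obtain ⟨b, rfl⟩ := mk_surjective b
      show mulQ1 F S star lam n a (mk F S star lam n b)
        = mulQ1 F S star lam n b (mk F S star lam n a)
      rw [mulQ1_mk, mulQ1_mk]
      exact mk_eq_mk (Submodule.subset_span (Rel.comm a b)) }

variable {F S star lam n}

lemma mul_def (x y : U F S star lam n) : x * y = mulU F S star lam n x y := rfl

lemma mk_mul (x y : V F S n) :
    mk F S star lam n x * mk F S star lam n y = mk F S star lam n (x * y) := rfl

instance : SMulCommClass F (U F S star lam n) (U F S star lam n) :=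
  ⟨fun c x y => by
    show c • (x * y) = x * (c • y)
    rw [mul_def, mul_def, map_smul]⟩

instance : IsScalarTower F (U F S star lam n) (U F S star lam n) :=
  ⟨fun c x y => by
    show (c • x) * y = c • (x * y)
    rw [mul_def, mul_def, map_smul, LinearMap.smul_apply]⟩

variable (F S star lam n)

def Pbar (j : Fin n) (s : S) : U F S star lam n →ₗ[F] U F S star lam n :=
  Submodule.mapQ _ _ (P F S n j s) (fun _ hx => R_proj j s hx)

variable {F S star lam n}

lemma Pbar_mk (j : Fin n) (s : S) (x : V F S n) :
    Pbar F S star lam n j s (mk F S star lam n x) = mk F S star lam n (P F S n j s x) := rfl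

variable (F S star lam n)

/-- The universal decompositions. -/
def D (j : Fin n) : Decomposition F (U F S star lam n) S star where
  comp s := LinearMap.range (Pbar F S star lam n j s)
  proj s := Pbar F S star lam n j s
  proj_mem s x := ⟨x, rfl⟩
  proj_eq_self s x hx := by
    obtain ⟨y, rfl⟩ := hx
    obtain ⟨y, rfl⟩ := mk_surjective y
    simp only [Pbar_mk]
    exact mk_eq_mk (Submodule.subset_span (Rel.proj_proj j s y))
  proj_eq_zero s t hst x hx := by
    obtain ⟨y, rfl⟩ := hx
    obtain ⟨y, rfl⟩ := mk_surjective y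
    simp only [Pbar_mk]
    exact mk_eq_zero (Submodule.subset_span (Rel.proj_ne j hst y))
  sum_proj x := by
    obtain ⟨y, rfl⟩ := mk_surjective x
    simp only [Pbar_mk]
    rw [← map_sum]
    exact mk_eq_mk (Submodule.subset_span (Rel.sum_proj j y))
  fusion s t x hx y hy := by
    obtain ⟨x, rfl⟩ := hx
    obtain ⟨x, rfl⟩ := mk_surjective x
    obtain ⟨y, rfl⟩ := hy
    obtain ⟨y, rfl⟩ := mk_surjective y
    simp only [Pbar_mk, mk_mul]
    set z := P F S n j s x * P F S n j t y with hz
    have hsum : mk F S star lam n z = ∑ u, mk F S star lam n (P F S n j u z) := by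
      rw [← map_sum]
      exact (mk_eq_mk (Submodule.subset_span (Rel.sum_proj j z))).symm
    rw [hsum]
    refine Submodule.sum_mem _ fun u _ => ?_
    by_cases hu : u ∈ star s t
    · have h1 : mk F S star lam n (P F S n j u z)
          ∈ LinearMap.range (Pbar F S star lam n j u) :=
        ⟨mk F S star lam n z, Pbar_mk j u z⟩
      exact Submodule.mem_iSup_of_mem u (Submodule.mem_iSup_of_mem hu h1)
    · have h0 : mk F S star lam n (P F S n j u z) = 0 :=
        mk_eq_zero (Submodule.subset_span (Rel.fusion j hu x y))
      rw [h0]; exact Submodule.zero_mem _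

def uGen (i : Fin n) : U F S star lam n := mk F S star lam n (genV F S n i)

variable {F S star lam n}

lemma axis_uGen (i : Fin n) :
    IsLambdaAxis lam (uGen F S star lam n i) (D F S star lam n i) := by
  intro s x hx
  obtain ⟨y, hy⟩ := hx
  obtain ⟨y, rfl⟩ := mk_surjective y
  rw [show x = Pbar F S star lam n i s (mk F S star lam n y) from hy.symm, Pbar_mk]
  rw [show uGen F S star lam n i * mk F S star lam n (P F S n i s y)
      = mk F S star lam n (genV F S n i * P F S n i s y) from rfl, ← map_smul]
  exact mk_eq_mk (Submodule.subset_span (Rel.axis i s y))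

lemma P_single (j : Fin n) (s : S) (a : T S n) (c : F) :
    P F S n j s (MonoidAlgebra.single a c) = MonoidAlgebra.single (T.prj j s a) c :=
  MonoidAlgebra.mapDomainLinearMap_single _ _ _

lemma mk_single_mem (A : NonUnitalSubalgebra F (U F S star lam n))
    (hu : ∀ i, uGen F S star lam n i ∈ A)
    (hP : ∀ j s, ∀ x ∈ A, Pbar F S star lam n j s x ∈ A) (t : T S n) :
    mk F S star lam n (MonoidAlgebra.single t 1) ∈ A := by
  induction t with
  | gen i => exact hu i
  | mul a b ha hb =>
    have h := A.mul_mem ha hb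
    rwa [mk_mul, show (MonoidAlgebra.single a 1 * MonoidAlgebra.single b 1 : V F S n)
      = MonoidAlgebra.single (T.mul a b) 1 from by
        rw [MonoidAlgebra.single_mul_single, one_mul]; rfl] at h
  | prj j s a ha =>
    have h := hP j s _ ha
    rwa [Pbar_mk, P_single] at h

lemma gens : GensDecompAlg (D F S star lam n) (Set.range (uGen F S star lam n)) := by
  intro A hX hP x
  obtain ⟨v, rfl⟩ := mk_surjective x
  have hu : ∀ i, uGen F S star lam n i ∈ A := fun i => hX ⟨i, rfl⟩
  have hP' : ∀ j s, ∀ x ∈ A, Pbar F S star lam n j s x ∈ A := hP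
  induction v using MonoidAlgebra.induction_linear with
  | zero => simpa using A.zero_mem'
  | add f g hf hg => rw [map_add]; exact A.add_mem hf hg
  | single a c =>
    have hs : (MonoidAlgebra.single a c : V F S n) = c • MonoidAlgebra.single a 1 := by
      rw [MonoidAlgebra.smul_single, smul_eq_mul, mul_one]
    rw [hs, map_smul]
    exact A.smul_mem c (mk_single_mem A hu hP' a)

section Eval

variable {N : Type} [NonUnitalNonAssocCommRing N] [Module F N]
  [SMulCommClass F N N] [IsScalarTower F N N]
  (E : Fin n → Decomposition F N S star) (b : Fin n → N)

def evalT : T S n → N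
  | .gen i => b i
  | .mul x y => evalT x * evalT y
  | .prj j s x => (E j).proj s (evalT x)

def evalV : V F S n →ₗ[F] N :=
  Finsupp.linearCombination F (evalT E b) ∘ₗ (MonoidAlgebra.coeffLinearEquiv F).toLinearMap

lemma evalV_single (t : T S n) (c : F) :
    evalV E b (MonoidAlgebra.single t c) = c • evalT E b t :=
  Finsupp.linearCombination_single F c t

lemma evalV_mul (x y : V F S n) :
    evalV E b (x * y) = evalV E b x * evalV E b y := by
  induction x using MonoidAlgebra.induction_linear with
  | zero => rw [zero_mul, map_zero, zero_mul]
  | add f g hf hg => rw [add_mul, map_add, hf, hg, map_add, add_mul]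
  | single a c =>
    induction y using MonoidAlgebra.induction_linear with
    | zero => rw [mul_zero, map_zero, mul_zero]
    | add f g hf hg => rw [mul_add, map_add, hf, hg, map_add, mul_add]
    | single a' c' =>
      rw [MonoidAlgebra.single_mul_single, evalV_single, evalV_single, evalV_single,
        show evalT E b (a * a') = evalT E b a * evalT E b a' from rfl,
        smul_mul_assoc, mul_smul_comm, smul_smul]

lemma evalV_P (j : Fin n) (s : S) (x : V F S n) :
    evalV E b (P F S n j s x) = (E j).proj s (evalV E b x) := by
  induction x using MonoidAlgebra.induction_linear with
  | zero => simp
  | add f g hf hg => rw [map_add, map_add, hf, hg, map_add, map_add]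
  | single a c =>
    rw [P_single, evalV_single, evalV_single]
    rw [show evalT E b (T.prj j s a) = (E j).proj s (evalT E b a) from rfl, map_smul]

lemma evalV_genV (i : Fin n) : evalV E b (genV F S n i) = b i := by
  rw [genV, evalV_single, one_smul]
  rfl

lemma evalV_rel_zero (hax : ∀ i, IsLambdaAxis lam (b i) (E i))
    {x : V F S n} (hx : Rel F S star lam n x) : evalV E b x = 0 := by
  induction hx with
  | comm x y => rw [map_sub, evalV_mul, evalV_mul, mul_comm, sub_self]
  | sum_proj j x =>
    rw [map_sub, map_sum]
    simp only [evalV_P]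
    rw [(E j).sum_proj, sub_self]
  | proj_proj j s x =>
    rw [map_sub, evalV_P, evalV_P,
      (E j).proj_eq_self s _ ((E j).proj_mem s _), sub_self]
  | proj_ne j h x =>
    rw [evalV_P, evalV_P, (E j).proj_eq_zero _ _ h _ ((E j).proj_mem _ _)]
  | @fusion j s t u h x y =>
    rw [evalV_P, evalV_mul, evalV_P, evalV_P]
    have hm := (E j).fusion s t _ ((E j).proj_mem s (evalV E b x)) _
      ((E j).proj_mem t (evalV E b y))
    have hker : (⨆ u' ∈ star s t, (E j).comp u') ≤ LinearMap.ker ((E j).proj u) := by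
      refine iSup₂_le fun u' hu' => fun z hz => ?_
      have hne : u ≠ u' := fun he => h (he ▸ hu')
      exact LinearMap.mem_ker.2 ((E j).proj_eq_zero u u' hne z hz)
    exact LinearMap.mem_ker.1 (hker hm)
  | axis i s x =>
    rw [map_sub, evalV_mul, evalV_genV, map_smul, evalV_P,
      hax i s _ ((E i).proj_mem s _), sub_self]
  | mul_left v h ih => rw [evalV_mul, ih, mul_zero]
  | mul_right v h ih => rw [evalV_mul, ih, zero_mul]
  | proj_cl j s h ih => rw [evalV_P, ih, map_zero]

variable (hax : ∀ i, IsLambdaAxis lam (b i) (E i))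

def phiL : U F S star lam n →ₗ[F] N :=
  Submodule.liftQ _ (evalV E b) (by
    rw [R, Submodule.span_le]
    intro x hx
    exact LinearMap.mem_ker.2 (evalV_rel_zero E b hax hx))

lemma phiL_mk (v : V F S n) : phiL E b hax (mk F S star lam n v) = evalV E b v := rfl

def phi : U F S star lam n →ₙₐ[F] N where
  toFun := phiL E b hax
  map_add' := map_add _
  map_smul' := map_smul _
  map_zero' := map_zero _
  map_mul' x y := by
    obtain ⟨x, rfl⟩ := mk_surjective x
    obtain ⟨y, rfl⟩ := mk_surjective y
    show phiL E b hax (mk F S star lam n x * mk F S star lam n y)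
      = phiL E b hax (mk F S star lam n x) * phiL E b hax (mk F S star lam n y)
    rw [mk_mul, phiL_mk, phiL_mk, phiL_mk, evalV_mul]

lemma phi_uGen (i : Fin n) : phi E b hax (uGen F S star lam n i) = b i := by
  rw [uGen]
  exact evalV_genV E b i

lemma phi_comp (i : Fin n) (s : S) (x : U F S star lam n)
    (hx : x ∈ (D F S star lam n i).comp s) : phi E b hax x ∈ (E i).comp s := by
  obtain ⟨y, rfl⟩ := hx
  obtain ⟨y, rfl⟩ := mk_surjective y
  have h1 : phi E b hax (Pbar F S star lam n i s (mk F S star lam n y))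
      = (E i).proj s (evalV E b y) := by
    show evalV E b (P F S n i s y) = _
    rw [evalV_P]
  rw [h1]
  exact (E i).proj_mem s _

/-- Any hom respecting the components intertwines the projections. -/
lemma hom_proj (ψ : U F S star lam n →ₙₐ[F] N)
    (hc : ∀ i s, ∀ x ∈ (D F S star lam n i).comp s, ψ x ∈ (E i).comp s)
    (j : Fin n) (s : S) (x : U F S star lam n) :
    ψ ((D F S star lam n j).proj s x) = (E j).proj s (ψ x) := by
  conv_rhs => rw [← (D F S star lam n j).sum_proj x]
  rw [map_sum, map_sum, Finset.sum_eq_single s]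
  · exact ((E j).proj_eq_self s _ (hc j s _ ((D F S star lam n j).proj_mem s x))).symm
  · intro t _ hts
    exact (E j).proj_eq_zero s t (Ne.symm hts) _ (hc j t _ ((D F S star lam n j).proj_mem t x))
  · intro h; exact absurd (Finset.mem_univ s) h

/-- The equalizer of two algebra homs, as a non-unital subalgebra. -/
def eqSubalg (ψ₁ ψ₂ : U F S star lam n →ₙₐ[F] N) :
    NonUnitalSubalgebra F (U F S star lam n) where
  carrier := {x | ψ₁ x = ψ₂ x}
  add_mem' := fun {a b} ha hb => by
    simp only [Set.mem_setOf_eq] at *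
    rw [map_add, map_add, ha, hb]
  zero_mem' := by simp only [Set.mem_setOf_eq, map_zero]
  mul_mem' := fun {a b} ha hb => by
    simp only [Set.mem_setOf_eq] at *
    rw [map_mul, map_mul, ha, hb]
  smul_mem' := fun c x hx => by
    simp only [Set.mem_setOf_eq] at *
    rw [map_smul, map_smul, hx]

end Eval

end

end UA

/-- Corollary 2: the category of `(F,λ)`-axial decomposition algebras over `F`
generated by `n` axes has a universal object. -/
theorem universal_axial_decomposition_algebra (F : Type) [Field F]
    (hchar : ringChar F ≠ 2) (S : Type) [Fintype S] (star : S → S → Set S)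
    (lam : S → F) (n : ℕ) (hn : 0 < n) :
    ∃ (U : CommNAAlg F) (D : Fin n → Decomposition F U.carrier S star)
      (u : Fin n → U.carrier),
      (∀ i, IsLambdaAxis lam (u i) (D i)) ∧
      GensDecompAlg D (Set.range u) ∧
      ∀ (N : CommNAAlg F) (E : Fin n → Decomposition F N.carrier S star)
        (b : Fin n → N.carrier),
        (∀ i, IsLambdaAxis lam (b i) (E i)) → GensDecompAlg E (Set.range b) →
        (∃! φ : U.carrier →ₙₐ[F] N.carrier,
            (∀ i, φ (u i) = b i) ∧
            ∀ i s, ∀ x ∈ (D i).comp s, φ x ∈ (E i).comp s) ∧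
        ∀ φ : U.carrier →ₙₐ[F] N.carrier,
          ((∀ i, φ (u i) = b i) ∧
            ∀ i s, ∀ x ∈ (D i).comp s, φ x ∈ (E i).comp s) →
          Function.Surjective φ := by
  classical
  refine ⟨⟨UA.U F S star lam n⟩, UA.D F S star lam n, UA.uGen F S star lam n,
    fun i => UA.axis_uGen i, UA.gens, ?_⟩
  intro N E b hax hgen
  constructor
  · refine ⟨UA.phi E b hax, ⟨fun i => UA.phi_uGen E b hax i,
      fun i s x hx => UA.phi_comp E b hax i s x hx⟩, ?_⟩
    intro ψ hψ
    refine DFunLike.ext _ _ fun x => ?_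
    have key := UA.gens (UA.eqSubalg ψ (UA.phi E b hax)) ?_ ?_ x
    · exact key
    · rintro _ ⟨i, rfl⟩
      show ψ (UA.uGen F S star lam n i) = UA.phi E b hax (UA.uGen F S star lam n i)
      rw [hψ.1 i, UA.phi_uGen]
    · intro j s y hy
      show ψ ((UA.D F S star lam n j).proj s y) = UA.phi E b hax ((UA.D F S star lam n j).proj s y)
      rw [UA.hom_proj E ψ hψ.2 j s y,
        UA.hom_proj E (UA.phi E b hax) (fun i s x hx => UA.phi_comp E b hax i s x hx) j s y]
      have hyy : ψ y = UA.phi E b hax y := hy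
      rw [hyy]
  · intro ψ hψ y
    have key := hgen (NonUnitalAlgHom.range ψ) ?_ ?_ y
    · obtain ⟨x, hx⟩ := (NonUnitalAlgHom.mem_range ψ).1 key
      exact ⟨x, hx⟩
    · rintro _ ⟨i, rfl⟩
      exact ⟨UA.uGen F S star lam n i, hψ.1 i⟩
    · rintro j s _ ⟨x, rfl⟩
      exact ⟨(UA.D F S star lam n j).proj s x, UA.hom_proj E ψ hψ.2 j s x⟩
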